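/- Let 𝔽 be any field, let P₁,…,Pₘ ∈ 𝔽[x₁,…,xₙ], and let X ⊆ 𝔽ⁿ be a set such that the image Pᵢ(X) is finite for every 1 ≤ i ≤ m. Then the ideal of all polynomials vanishing on Z(P₁,…,Pₘ) ∩ X equals the ideal sum ⟨P₁,…,Pₘ⟩ + I(X), where I(X) is the ideal of all polynomials vanishing on X. -/

import Mathlib

open MvPolynomial

/-- Qualitative "finite" Nullstellensatz: I(Z(P_1,...,P_m) ∩ X) = ⟨P_1,...,P_m⟩ + I(X). -/
theorem statement14 {K : Type*} [Field K] {n m : ℕ}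
    (P : Fin m → MvPolynomial (Fin n) K) (X : Set (Fin n → K))
    (hfin : ∀ i, ((fun x => MvPolynomial.eval x (P i)) '' X).Finite) :
    MvPolynomial.vanishingIdeal K
        ({x : Fin n → K | ∀ i, MvPolynomial.eval x (P i) = 0} ∩ X) =
      Ideal.span (Set.range P) + MvPolynomial.vanishingIdeal K X := by
  classical
  rw [Ideal.add_eq_sup]
  apply le_antisymm
  · -- hard direction
    intro f hf
    rw [MvPolynomial.mem_vanishingIdeal_iff] at hf
    set T : Fin m → Finset K := fun i => ((hfin i).toFinset).erase 0 with hT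
    set g : MvPolynomial (Fin n) K := ∏ i, ∏ a ∈ T i, (P i - MvPolynomial.C a) with hg
    set c : K := ∏ i, ∏ a ∈ T i, (-a) with hc
    have hc0 : c ≠ 0 := by
      rw [hc]
      apply Finset.prod_ne_zero_iff.mpr
      intro i _
      apply Finset.prod_ne_zero_iff.mpr
      intro a ha
      simpa using (Finset.mem_erase.mp ha).1
    have h1 : ∀ i, Ideal.Quotient.mk (Ideal.span (Set.range P)) (P i) = 0 := fun i =>
      Ideal.Quotient.eq_zero_iff_mem.mpr (Ideal.subset_span ⟨i, rfl⟩)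
    have hmod : MvPolynomial.C c - g ∈ Ideal.span (Set.range P) := by
      rw [← Ideal.Quotient.eq]
      simp only [hc, hg, map_prod, map_sub, map_neg, h1, zero_sub]
    have hfg : f * g ∈ MvPolynomial.vanishingIdeal K X := by
      rw [MvPolynomial.mem_vanishingIdeal_iff]
      intro x hx
      rw [map_mul]
      by_cases hz : ∀ i, MvPolynomial.eval x (P i) = 0
      · rw [hf x ⟨hz, hx⟩, zero_mul]
      · push_neg at hz
        obtain ⟨i, hi⟩ := hz
        have hgz : MvPolynomial.eval x g = 0 := by
          rw [hg, map_prod]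
          apply Finset.prod_eq_zero (Finset.mem_univ i)
          rw [map_prod]
          have hmem : MvPolynomial.eval x (P i) ∈ T i := by
            rw [hT]
            simp only [Finset.mem_erase, Set.Finite.mem_toFinset, Set.mem_image]
            exact ⟨hi, x, hx, rfl⟩
          apply Finset.prod_eq_zero hmem
          simp
        rw [show (MvPolynomial.aeval x) g = 0 from hgz, mul_zero]
    have key : MvPolynomial.C c * f ∈
        Ideal.span (Set.range P) ⊔ MvPolynomial.vanishingIdeal K X := by
      have heq : MvPolynomial.C c * f = f * g + f * (MvPolynomial.C c - g) := by ring
      rw [heq]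
      exact Ideal.add_mem _ (Ideal.mem_sup_right hfg)
        (Ideal.mem_sup_left (Ideal.mul_mem_left _ _ hmod))
    have hfeq : f = MvPolynomial.C c⁻¹ * (MvPolynomial.C c * f) := by
      rw [← mul_assoc, ← map_mul, inv_mul_cancel₀ hc0, MvPolynomial.C_1, one_mul]
    rw [hfeq]
    exact Ideal.mul_mem_left _ _ key
  · apply sup_le
    · rw [Ideal.span_le]
      rintro _ ⟨i, rfl⟩
      rw [SetLike.mem_coe, MvPolynomial.mem_vanishingIdeal_iff]
      rintro x ⟨hx1, _⟩
      exact hx1 i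
    · exact MvPolynomial.vanishingIdeal_anti_mono Set.inter_subset_right
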